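/- Let X be an n×d real matrix of full column rank with singular value decomposition X = UΣVᵀ, let y ∈ ℝⁿ, and λ > 0. Let θ* = argmin_θ ‖Xθ − y‖₂² and θ_RR(λ) = argmin_θ (‖Xθ − y‖₂² + λ‖θ‖₂²). Then ‖X(θ_RR(λ) − θ*)‖₂ ≤ (λ/(σ_min(X)² + λ)) · ‖Xθ*‖₂. -/

import Mathlib

open Matrix Real Finset

/-- Euclidean (ℓ₂) norm of a finite-dimensional real vector. -/
noncomputable def enorm' {ι : Type*} [Fintype ι] (v : ι → ℝ) : ℝ :=
  Real.sqrt (∑ i, v i ^ 2)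

/-- Singular values of a real matrix: square roots of the eigenvalues of `Xᵀ X`. -/
noncomputable def singVals {n d : ℕ} (X : Matrix (Fin n) (Fin d) ℝ) : Fin d → ℝ :=
  fun i => Real.sqrt ((show (Xᵀ * X).IsHermitian by
    simpa using Matrix.isHermitian_conjTranspose_mul_self X).eigenvalues i)

/-- Smallest singular value. -/
noncomputable def sigMin {n d : ℕ} [NeZero d] (X : Matrix (Fin n) (Fin d) ℝ) : ℝ :=
  Finset.univ.inf' Finset.univ_nonempty (singVals X)

/-- Least squares solution `θ* = (XᵀX)⁻¹ Xᵀ y`. -/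
noncomputable def lsSol {n d : ℕ} (X : Matrix (Fin n) (Fin d) ℝ) (y : Fin n → ℝ) :
    Fin d → ℝ :=
  ((Xᵀ * X)⁻¹ * Xᵀ).mulVec y

/-- Ridge regression solution `θ_RR(λ) = (XᵀX + λI)⁻¹ Xᵀ y`. -/
noncomputable def rrSol {n d : ℕ} (X : Matrix (Fin n) (Fin d) ℝ) (y : Fin n → ℝ)
    (lam : ℝ) : Fin d → ℝ :=
  ((Xᵀ * X + lam • (1 : Matrix (Fin d) (Fin d) ℝ))⁻¹ * Xᵀ).mulVec y

section helpers
variable {d : ℕ}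

lemma my_diag_conj_mul (U : Matrix (Fin d) (Fin d) ℝ) (hU : Uᵀ * U = 1)
    (f g : Fin d → ℝ) :
    (U * diagonal f * Uᵀ) * (U * diagonal g * Uᵀ) = U * diagonal (fun i => f i * g i) * Uᵀ := by
  have h : (U * diagonal f * Uᵀ) * (U * diagonal g * Uᵀ)
      = U * (diagonal f * ((Uᵀ * U) * (diagonal g * Uᵀ))) := by
    simp only [Matrix.mul_assoc]
  rw [h, hU, one_mul, ← Matrix.mul_assoc, ← Matrix.mul_assoc,
    Matrix.mul_assoc U (diagonal f) (diagonal g), diagonal_mul_diagonal]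

lemma my_inv_conj (U : Matrix (Fin d) (Fin d) ℝ) (hU1 : Uᵀ * U = 1) (hU2 : U * Uᵀ = 1)
    (f : Fin d → ℝ) (hf : ∀ i, f i ≠ 0) :
    (U * diagonal f * Uᵀ)⁻¹ = U * diagonal (fun i => (f i)⁻¹) * Uᵀ := by
  apply Matrix.inv_eq_right_inv
  rw [my_diag_conj_mul U hU1]
  have h : (fun i => f i * (f i)⁻¹) = fun _ => (1:ℝ) := by
    funext i; exact mul_inv_cancel₀ (hf i)
  rw [h, diagonal_one, Matrix.mul_one, hU2]

lemma my_quad (U : Matrix (Fin d) (Fin d) ℝ) (f : Fin d → ℝ) (z : Fin d → ℝ) :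
    z ⬝ᵥ (U * diagonal f * Uᵀ).mulVec z = ∑ i, f i * (Uᵀ.mulVec z i)^2 := by
  rw [← mulVec_mulVec, ← mulVec_mulVec, dotProduct_mulVec]
  have h1 : z ᵥ* U = Uᵀ.mulVec z := by rw [Matrix.mulVec_transpose]
  rw [h1]
  simp only [dotProduct, mulVec_diagonal]
  exact Finset.sum_congr rfl fun i _ => by ring

lemma my_dot_swap {n : ℕ} (P : Matrix (Fin n) (Fin d) ℝ) (z : Fin d → ℝ) (v : Fin n → ℝ) :
    (P.mulVec z) ⬝ᵥ v = z ⬝ᵥ (Pᵀ.mulVec v) := by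
  rw [dotProduct_mulVec z Pᵀ v, Matrix.vecMul_transpose, dotProduct_comm]

lemma my_quad2 (P Q : Matrix (Fin d) (Fin d) ℝ) (hP : Pᵀ = P) (z : Fin d → ℝ) :
    (P.mulVec z) ⬝ᵥ (Q.mulVec (P.mulVec z)) = z ⬝ᵥ ((P * Q * P).mulVec z) := by
  rw [mulVec_mulVec, my_dot_swap, mulVec_mulVec, hP, ← Matrix.mul_assoc]

lemma my_symm (U : Matrix (Fin d) (Fin d) ℝ) (f : Fin d → ℝ) :
    (U * diagonal f * Uᵀ)ᵀ = U * diagonal f * Uᵀ := by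
  rw [transpose_mul, transpose_mul, transpose_transpose, diagonal_transpose, Matrix.mul_assoc]

end helpers

theorem stmt_0 {n d : ℕ} [NeZero d] (X : Matrix (Fin n) (Fin d) ℝ)
    (hrank : X.rank = d) (y : Fin n → ℝ) (lam : ℝ) (hlam : 0 < lam) :
    enorm' (X.mulVec (rrSol X y lam - lsSol X y)) ≤
      (lam / ((sigMin X) ^ 2 + lam)) * enorm' (X.mulVec (lsSol X y)) := by
  classical
  set A : Matrix (Fin d) (Fin d) ℝ := Xᵀ * X with hAdef
  have hA : A.IsHermitian := by
    rw [hAdef]; simpa using Matrix.isHermitian_conjTranspose_mul_self X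
  set μ : Fin d → ℝ := hA.eigenvalues with hμdef
  set U : Matrix (Fin d) (Fin d) ℝ := (hA.eigenvectorUnitary : Matrix (Fin d) (Fin d) ℝ)
    with hUdef
  have hU1 : Uᵀ * U = 1 := by
    have h := Unitary.star_mul_self_of_mem hA.eigenvectorUnitary.2
    rwa [Matrix.star_eq_conjTranspose, conjTranspose_eq_transpose_of_trivial] at h
  have hU2 : U * Uᵀ = 1 := by
    have h := Unitary.mul_star_self_of_mem hA.eigenvectorUnitary.2
    rwa [Matrix.star_eq_conjTranspose, conjTranspose_eq_transpose_of_trivial] at h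
  have hspec : A = U * diagonal μ * Uᵀ := by
    have h := hA.spectral_theorem
    simpa [Matrix.star_eq_conjTranspose, Matrix.conjTranspose_eq_transpose_of_trivial, Function.comp, ← hUdef, ← hμdef] using h
  -- invertibility
  have hrankA : A.rank = d := by rw [hAdef, Matrix.rank_transpose_mul_self, hrank]
  have hunit : IsUnit A := by
    rw [← Matrix.mulVec_surjective_iff_isUnit]
    have htop : LinearMap.range A.mulVecLin = ⊤ := by
      apply Submodule.eq_top_of_finrank_eq
      rw [← Matrix.rank, hrankA]
      simp [Module.finrank_fintype_fun_eq_card]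
    intro v
    have := LinearMap.range_eq_top.mp htop v
    simpa using this
  have hdet : A.det ≠ 0 := ((Matrix.isUnit_iff_isUnit_det A).mp hunit).ne_zero
  have hμpos : ∀ i, 0 < μ i := by
    intro i
    have hnn : 0 ≤ μ i := Matrix.eigenvalues_conjTranspose_mul_self_nonneg X i
    have hne : μ i ≠ 0 := by
      intro h0
      apply hdet
      rw [hA.det_eq_prod_eigenvalues]
      exact Finset.prod_eq_zero (Finset.mem_univ i) (by simpa using h0)
    exact hnn.lt_of_ne' hne
  -- spectral forms
  set z : Fin d → ℝ := Xᵀ.mulVec y with hzdef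
  set b : Fin d → ℝ := Uᵀ.mulVec z with hbdef
  have hAinv : A⁻¹ = U * diagonal (fun i => (μ i)⁻¹) * Uᵀ := by
    rw [hspec]
    exact my_inv_conj U hU1 hU2 μ (fun i => (hμpos i).ne')
  have hApl : A + lam • (1 : Matrix (Fin d) (Fin d) ℝ)
      = U * diagonal (fun i => μ i + lam) * Uᵀ := by
    have h1 : diagonal (fun i => μ i + lam) = diagonal μ + lam • (1 : Matrix (Fin d) (Fin d) ℝ) := by
      rw [Matrix.smul_one_eq_diagonal, ← diagonal_add]
    rw [h1, Matrix.mul_add, Matrix.add_mul, ← hspec, Matrix.mul_smul, Matrix.smul_mul, Matrix.mul_one, hU2]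
  have hBinv : (A + lam • (1 : Matrix (Fin d) (Fin d) ℝ))⁻¹
      = U * diagonal (fun i => (μ i + lam)⁻¹) * Uᵀ := by
    rw [hApl]
    exact my_inv_conj U hU1 hU2 _ (fun i => by have := hμpos i; positivity)
  -- difference
  set h : Fin d → ℝ := fun i => (μ i + lam)⁻¹ - (μ i)⁻¹ with hhdef
  have hls : lsSol X y = (U * diagonal (fun i => (μ i)⁻¹) * Uᵀ).mulVec z := by
    rw [lsSol, ← hAdef, hAinv, ← mulVec_mulVec, hzdef, Matrix.mul_assoc]
  have hdiff : rrSol X y lam - lsSol X y = (U * diagonal h * Uᵀ).mulVec z := by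
    rw [rrSol, hls, ← hAdef, hBinv, ← mulVec_mulVec, ← sub_mulVec]
    congr 1
    rw [← Matrix.sub_mul, ← Matrix.mul_sub, ← diagonal_sub]
  -- enorm via quadratic form
  have henorm : ∀ v : Fin d → ℝ, enorm' (X.mulVec v) = Real.sqrt (v ⬝ᵥ A.mulVec v) := by
    intro v
    rw [enorm']
    congr 1
    rw [hAdef, ← mulVec_mulVec, ← my_dot_swap X v (X.mulVec v)]
    simp [dotProduct, pow_two]
  -- the two quadratic forms as sums
  have hPsymm : (U * diagonal h * Uᵀ)ᵀ = U * diagonal h * Uᵀ := my_symm U h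
  have hQsymm : (U * diagonal (fun i => (μ i)⁻¹) * Uᵀ)ᵀ
      = U * diagonal (fun i => (μ i)⁻¹) * Uᵀ := my_symm U _
  have hS1 : (rrSol X y lam - lsSol X y) ⬝ᵥ A.mulVec (rrSol X y lam - lsSol X y)
      = ∑ i, (h i * μ i * h i) * (b i)^2 := by
    rw [hdiff, my_quad2 _ _ hPsymm, hspec, my_diag_conj_mul U hU1, my_diag_conj_mul U hU1,
      my_quad, ← hbdef]
  have hS2 : (lsSol X y) ⬝ᵥ A.mulVec (lsSol X y)
      = ∑ i, ((μ i)⁻¹ * μ i * (μ i)⁻¹) * (b i)^2 := by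
    rw [hls, my_quad2 _ _ hQsymm, hspec, my_diag_conj_mul U hU1, my_diag_conj_mul U hU1,
      my_quad, ← hbdef]
  -- sigma min facts
  have hsignn : 0 ≤ sigMin X := by
    apply Finset.le_inf'
    intro i _
    exact Real.sqrt_nonneg _
  have hsle : ∀ i, sigMin X ^ 2 ≤ μ i := by
    intro i
    have h1 : sigMin X ≤ singVals X i := Finset.inf'_le _ (Finset.mem_univ i)
    have h2 : sigMin X ^ 2 ≤ singVals X i ^ 2 := pow_le_pow_left₀ hsignn h1 2
    have h3 : singVals X i ^ 2 = μ i := Real.sq_sqrt (hμpos i).le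
    linarith
  set s : ℝ := sigMin X ^ 2 with hsdef
  have hs0 : 0 ≤ s := sq_nonneg _
  have hslam : 0 < s + lam := by linarith
  set c : ℝ := lam / (s + lam) with hcdef
  have hc0 : 0 ≤ c := div_nonneg hlam.le hslam.le
  -- assemble
  rw [henorm, henorm, hS1, hS2]
  have hrhs : c * Real.sqrt (∑ i, ((μ i)⁻¹ * μ i * (μ i)⁻¹) * (b i)^2)
      = Real.sqrt (c^2 * ∑ i, ((μ i)⁻¹ * μ i * (μ i)⁻¹) * (b i)^2) := by
    rw [Real.sqrt_mul (sq_nonneg c), Real.sqrt_sq hc0]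
  rw [hrhs]
  apply Real.sqrt_le_sqrt
  rw [Finset.mul_sum]
  apply Finset.sum_le_sum
  intro i _
  have hμi := hμpos i
  have hsli := hsle i
  have key : h i * μ i * h i ≤ c^2 * ((μ i)⁻¹ * μ i * (μ i)⁻¹) := by
    have e1 : h i * μ i * h i = lam^2 / (μ i * (μ i + lam)^2) := by
      rw [hhdef]
      field_simp
      try ring
    have e2 : c^2 * ((μ i)⁻¹ * μ i * (μ i)⁻¹) = lam^2 / ((s + lam)^2 * μ i) := by
      rw [hcdef]
      field_simp
      try ring
    rw [e1, e2]
    apply div_le_div_of_nonneg_left (by positivity) (by positivity)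
    have : (s + lam)^2 ≤ (μ i + lam)^2 := by nlinarith
    nlinarith
  rw [← mul_assoc]
  exact mul_le_mul_of_nonneg_right key (sq_nonneg _)
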